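/- With P₄(t,q) ∈ ℚ[[t,q]] as above and coefficients c_{a,b}, one has c_{a,b} = 0 whenever 2b ≥ 3a + 10 (the integer form of b − (3/2)a ≥ 5). -/

import Mathlib

open MvPowerSeries

noncomputable def tVar : MvPowerSeries (Fin 2) ℚ := MvPowerSeries.X 0
noncomputable def qVar : MvPowerSeries (Fin 2) ℚ := MvPowerSeries.X 1

noncomputable def GORNum : MvPowerSeries (Fin 2) ℚ :=
  (1 + qVar ^ 2) * (1 + tVar ^ 2 * qVar ^ 4) * (1 + tVar ^ 3 * qVar ^ 6) *
    (1 + tVar ^ 7 * qVar ^ 10)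

noncomputable def cf (a b : ℕ) (P : MvPowerSeries (Fin 2) ℚ) : ℚ :=
  MvPowerSeries.coeff (Finsupp.single (0 : Fin 2) a + Finsupp.single (1 : Fin 2) b) P

lemma cf_add (a b : ℕ) (f g : MvPowerSeries (Fin 2) ℚ) :
    cf a b (f + g) = cf a b f + cf a b g := map_add _ _ _

lemma cf_sub (a b : ℕ) (f g : MvPowerSeries (Fin 2) ℚ) :
    cf a b (f - g) = cf a b f - cf a b g := map_sub _ _ _

lemma cf_monomial (a b m n : ℕ) :
    cf a b (tVar ^ m * qVar ^ n) = if a = m ∧ b = n then 1 else 0 := by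
  rw [cf, tVar, qVar, MvPowerSeries.X_pow_eq, MvPowerSeries.X_pow_eq,
    MvPowerSeries.monomial_mul_monomial, one_mul, MvPowerSeries.coeff_monomial]
  congr 1
  simp only [eq_iff_iff]
  constructor
  · intro h
    constructor
    · have := DFunLike.congr_fun h (0 : Fin 2)
      simpa using this
    · have := DFunLike.congr_fun h (1 : Fin 2)
      simpa using this
  · rintro ⟨rfl, rfl⟩; rfl

lemma cf_mul_mono (P : MvPowerSeries (Fin 2) ℚ) (a b m n : ℕ) :
    cf a b (P * (tVar ^ m * qVar ^ n)) =
      if m ≤ a ∧ n ≤ b then cf (a - m) (b - n) P else 0 := by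
  rw [tVar, qVar, MvPowerSeries.X_pow_eq, MvPowerSeries.X_pow_eq,
    MvPowerSeries.monomial_mul_monomial, one_mul, cf, MvPowerSeries.coeff_mul_monomial]
  have hle : (Finsupp.single (0 : Fin 2) m + Finsupp.single (1 : Fin 2) n ≤
      Finsupp.single (0 : Fin 2) a + Finsupp.single (1 : Fin 2) b) ↔ (m ≤ a ∧ n ≤ b) := by
    simp [Finsupp.le_def, Fin.forall_fin_two, Finsupp.single_apply]
  by_cases h : m ≤ a ∧ n ≤ b
  · have hsub : (Finsupp.single (0 : Fin 2) a + Finsupp.single (1 : Fin 2) b) -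
        (Finsupp.single (0 : Fin 2) m + Finsupp.single (1 : Fin 2) n) =
        Finsupp.single (0 : Fin 2) (a - m) + Finsupp.single (1 : Fin 2) (b - n) := by
      ext i
      fin_cases i <;> simp [Finsupp.tsub_apply, Finsupp.single_apply]
    rw [if_pos (hle.mpr h), if_pos h, mul_one, cf, hsub]
  · rw [if_neg (fun hc => h (hle.mp hc)), if_neg h]

lemma cf_GOR (a b : ℕ) (hab : 2 * b ≥ 3 * a + 10) : cf a b GORNum = 0 := by
  have hG : GORNum = tVar ^ 0 * qVar ^ 0 + tVar ^ 0 * qVar ^ 2 + tVar ^ 2 * qVar ^ 4 +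
      tVar ^ 2 * qVar ^ 6 + tVar ^ 3 * qVar ^ 6 + tVar ^ 3 * qVar ^ 8 +
      tVar ^ 5 * qVar ^ 10 + tVar ^ 5 * qVar ^ 12 + tVar ^ 7 * qVar ^ 10 +
      tVar ^ 7 * qVar ^ 12 + tVar ^ 9 * qVar ^ 14 + tVar ^ 9 * qVar ^ 16 +
      tVar ^ 10 * qVar ^ 16 + tVar ^ 10 * qVar ^ 18 + tVar ^ 12 * qVar ^ 20 +
      tVar ^ 12 * qVar ^ 22 := by
    unfold GORNum; ring
  have H : ∀ m n : ℕ, 2 * n < 3 * m + 10 →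
      (if a = m ∧ b = n then (1 : ℚ) else 0) = 0 := by
    intro m n h
    rw [if_neg]
    rintro ⟨rfl, rfl⟩
    omega
  rw [hG]
  simp only [cf_add, cf_monomial]
  rw [H 0 0 (by omega), H 0 2 (by omega), H 2 4 (by omega), H 2 6 (by omega),
    H 3 6 (by omega), H 3 8 (by omega), H 5 10 (by omega), H 5 12 (by omega),
    H 7 10 (by omega), H 7 12 (by omega), H 9 14 (by omega), H 9 16 (by omega),
    H 10 16 (by omega), H 10 18 (by omega), H 12 20 (by omega), H 12 22 (by omega)]
  norm_num

theorem stmt6 (P₄ : MvPowerSeries (Fin 2) ℚ)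
    (hP₄ : P₄ * ((1 - tVar ^ 4 * qVar ^ 6) * (1 - tVar ^ 6 * qVar ^ 8)) = GORNum)
    (a b : ℕ) (hab : 2 * b ≥ 3 * a + 10) :
    cf a b P₄ = 0 := by
  have key : P₄ = GORNum + P₄ * (tVar ^ 4 * qVar ^ 6) + P₄ * (tVar ^ 6 * qVar ^ 8) -
      P₄ * (tVar ^ 10 * qVar ^ 14) := by
    rw [← hP₄]; ring
  induction a using Nat.strong_induction_on generalizing b with
  | _ a ih =>
    rw [congrArg (cf a b) key, cf_sub, cf_add, cf_add, cf_GOR a b hab,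
      cf_mul_mono, cf_mul_mono, cf_mul_mono]
    have h1 : (if 4 ≤ a ∧ 6 ≤ b then cf (a - 4) (b - 6) P₄ else 0) = 0 := by
      by_cases h : 4 ≤ a ∧ 6 ≤ b
      · rw [if_pos h]; exact ih (a - 4) (by omega) (b - 6) (by omega)
      · rw [if_neg h]
    have h2 : (if 6 ≤ a ∧ 8 ≤ b then cf (a - 6) (b - 8) P₄ else 0) = 0 := by
      by_cases h : 6 ≤ a ∧ 8 ≤ b
      · rw [if_pos h]; exact ih (a - 6) (by omega) (b - 8) (by omega)
      · rw [if_neg h]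
    have h3 : (if 10 ≤ a ∧ 14 ≤ b then cf (a - 10) (b - 14) P₄ else 0) = 0 := by
      by_cases h : 10 ≤ a ∧ 14 ≤ b
      · rw [if_pos h]; exact ih (a - 10) (by omega) (b - 14) (by omega)
      · rw [if_neg h]
    rw [h1, h2, h3]
    ring
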